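/- Let X_1, …, X_n be independent, identically distributed nonnegative real random variables on a probability space, let t₀ > 0 and set p := P(X_1 ≤ t₀). Then P( X_1 + ⋯ + X_n ≤ n·t₀/2 ) ≤ 2^n · p^{n/2}, where p^{n/2} denotes the real power p^{(n/2)}. -/

import Mathlib

open MeasureTheory ProbabilityTheory

/-- **(3.10).** For i.i.d. nonnegative `X_1, …, X_n` with common law `ν`, `t₀ > 0` and
`p := P(X_1 ≤ t₀)`, one has `P(X_1 + ⋯ + X_n ≤ n t₀ / 2) ≤ 2^n p^{n/2}`. -/
theorem stmt10 {Ω : Type*} [MeasurableSpace Ω] (μ : Measure Ω) [IsProbabilityMeasure μ]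
    (n : ℕ) (X : Fin n → Ω → ℝ) (hmeas : ∀ i, Measurable (X i))
    (hnonneg : ∀ i ω, 0 ≤ X i ω)
    (hindep : iIndepFun X μ)
    (ν : Measure ℝ) [IsProbabilityMeasure ν] (hid : ∀ i, Measure.map (X i) μ = ν)
    (t₀ : ℝ) (ht₀ : 0 < t₀) :
    μ {ω | ∑ i, X i ω ≤ (n : ℝ) * t₀ / 2}
      ≤ ENNReal.ofReal (2 ^ n * (ν (Set.Iic t₀)).toReal ^ ((n : ℝ) / 2)) := by
  classical
  set p : ENNReal := ν (Set.Iic t₀) with hp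
  have hpre : ∀ i, μ (X i ⁻¹' Set.Iic t₀) = p := by
    intro i
    rw [hp, ← hid i, Measure.map_apply (hmeas i) measurableSet_Iic]
  have hp1 : p ≤ 1 := prob_le_one
  have hpne : p ≠ ⊤ := (lt_of_le_of_lt hp1 ENNReal.one_lt_top).ne
  set q : ℝ := p.toReal with hq
  have hq0 : 0 ≤ q := ENNReal.toReal_nonneg
  have hq1 : q ≤ 1 := by
    have := ENNReal.toReal_mono (by simp) hp1
    simpa using this
  set F : Finset (Finset (Fin n)) :=
    Finset.univ.filter (fun S : Finset (Fin n) => n ≤ 2 * S.card) with hF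
  have hcover : {ω | ∑ i, X i ω ≤ (n : ℝ) * t₀ / 2} ⊆
      ⋃ S ∈ F, ⋂ i ∈ S, X i ⁻¹' Set.Iic t₀ := by
    intro ω hω
    simp only [Set.mem_setOf_eq] at hω
    set S : Finset (Fin n) := Finset.univ.filter (fun i => X i ω ≤ t₀) with hS
    have hcard : n ≤ 2 * S.card := by
      have hsub : ∑ i ∈ Sᶜ, X i ω ≤ ∑ i, X i ω :=
        Finset.sum_le_sum_of_subset_of_nonneg (Finset.subset_univ _)
          (fun i _ _ => hnonneg i ω)
      have hlb : Sᶜ.card • t₀ ≤ ∑ i ∈ Sᶜ, X i ω := by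
        apply Finset.card_nsmul_le_sum
        intro i hi
        have : ¬ (X i ω ≤ t₀) := by
          simpa [hS] using (Finset.mem_compl.mp hi)
        linarith
      have hcc : (Sᶜ.card : ℝ) = (n : ℝ) - S.card := by
        rw [Finset.card_compl]
        have hle : S.card ≤ Fintype.card (Fin n) := Finset.card_le_univ S
        push_cast [Nat.cast_sub hle]
        simp
      have h1 : ((n : ℝ) - S.card) * t₀ ≤ (n : ℝ) * t₀ / 2 := by
        rw [← hcc]
        calc (Sᶜ.card : ℝ) * t₀ = Sᶜ.card • t₀ := by rw [nsmul_eq_mul]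
          _ ≤ ∑ i ∈ Sᶜ, X i ω := hlb
          _ ≤ ∑ i, X i ω := hsub
          _ ≤ (n : ℝ) * t₀ / 2 := hω
      have h2 : (n : ℝ) ≤ 2 * S.card := by nlinarith
      exact_mod_cast h2
    have hSF : S ∈ F := Finset.mem_filter.mpr ⟨Finset.mem_univ _, hcard⟩
    refine Set.mem_biUnion hSF ?_
    simp only [Set.mem_iInter]
    intro i hi
    simpa [hS] using (Finset.mem_filter.mp hi).2
  have hqpow : ∀ S ∈ F, q ^ S.card ≤ q ^ ((n : ℝ) / 2) := by
    intro S hSF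
    have hcard : n ≤ 2 * S.card := (Finset.mem_filter.mp hSF).2
    rcases eq_or_lt_of_le hq0 with h0 | h0
    · rcases Nat.eq_zero_or_pos n with hn | hn
      · subst hn
        have hSe : S = ∅ := Finset.eq_empty_of_isEmpty S
        simp [hSe, ← h0, Real.rpow_zero]
      · have hc : 0 < S.card := by omega
        have : q ^ S.card = 0 := by
          rw [← h0]; exact zero_pow hc.ne'
        rw [this]
        exact Real.rpow_nonneg hq0 _
    · rw [← Real.rpow_natCast q S.card]
      apply Real.rpow_le_rpow_of_exponent_ge h0 hq1
      have : (n : ℝ) ≤ 2 * S.card := by exact_mod_cast hcard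
      linarith
  calc μ {ω | ∑ i, X i ω ≤ (n : ℝ) * t₀ / 2}
      ≤ μ (⋃ S ∈ F, ⋂ i ∈ S, X i ⁻¹' Set.Iic t₀) := measure_mono hcover
    _ ≤ ∑ S ∈ F, μ (⋂ i ∈ S, X i ⁻¹' Set.Iic t₀) := measure_biUnion_finset_le _ _
    _ ≤ ∑ S ∈ F, ENNReal.ofReal (q ^ ((n : ℝ) / 2)) := by
        apply Finset.sum_le_sum
        intro S hSF
        rw [hindep.measure_inter_preimage_eq_mul S (fun i _ => measurableSet_Iic)]
        calc ∏ i ∈ S, μ (X i ⁻¹' Set.Iic t₀) = p ^ S.card := by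
              simp [hpre, Finset.prod_const]
          _ = ENNReal.ofReal (q ^ S.card) := by
              rw [ENNReal.ofReal_pow hq0, hq, ENNReal.ofReal_toReal hpne]
          _ ≤ ENNReal.ofReal (q ^ ((n : ℝ) / 2)) :=
              ENNReal.ofReal_le_ofReal (hqpow S hSF)
    _ ≤ ENNReal.ofReal (2 ^ n * q ^ ((n : ℝ) / 2)) := by
        rw [Finset.sum_const, nsmul_eq_mul, ENNReal.ofReal_mul (by positivity)]
        refine mul_le_mul_left ?_ _
        have h1 : F.card ≤ 2 ^ n := by
          calc F.card ≤ Fintype.card (Finset (Fin n)) := Finset.card_le_univ F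
            _ = 2 ^ n := by simp
        calc (F.card : ENNReal) ≤ ((2 ^ n : ℕ) : ENNReal) := Nat.cast_le.mpr h1
          _ = ENNReal.ofReal (2 ^ n) := by
              rw [ENNReal.ofReal_pow (by norm_num)]
              norm_num
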